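/- arXiv:1308.0997 — 9 statements merged into one kernel-verified Lean document; each statement's English description precedes it below -/
import Mathlib

section
/- Let R be a commutative ring that is a ℚ-algebra and let a, b ∈ R. With f₁, f₂, f₃ as below, the identity (f₂′·f₁ − f₁′·f₂)·f₃ = f₂′ holds in the formal power series ring R[[x]]. -/
open PowerSeries

/-- `f₁ = Σ_{k≥0} (∏_{r=1}^{k} (a+r−1)(b+r−1)) · x^{2k}/(2k)!` as a formal power series:
its coefficient at `x^n` is `(∏_{r=0}^{n/2-1} (a+r)(b+r))/n!` if `n` is even, and `0` otherwise. -/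
noncomputable def f₁ {R : Type*} [CommRing R] [Algebra ℚ R] (a b : R) : R⟦X⟧ :=
  PowerSeries.mk fun n =>
    if n % 2 = 0 then
      ((Nat.factorial n : ℚ))⁻¹ • ∏ r ∈ Finset.range (n / 2), ((a + (r : R)) * (b + (r : R)))
    else 0

/-- `f₂ = Σ_{k≥0} (∏_{r=1}^{k} (a+r−1/2)(b+r−1/2)) · x^{2k+1}/(2k+1)!`. -/
noncomputable def f₂ {R : Type*} [CommRing R] [Algebra ℚ R] (a b : R) : R⟦X⟧ :=
  PowerSeries.mk fun n =>
    if n % 2 = 1 then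
      ((Nat.factorial n : ℚ))⁻¹ • ∏ r ∈ Finset.range (n / 2),
        ((a + (r : R) + algebraMap ℚ R (1/2)) * (b + (r : R) + algebraMap ℚ R (1/2)))
    else 0

/-- `f₃ = Σ_{k≥0} (∏_{r=1}^{k} (a−r+1)(b−r+1)) · x^{2k}/(2k)!`. -/
noncomputable def f₃ {R : Type*} [CommRing R] [Algebra ℚ R] (a b : R) : R⟦X⟧ :=
  PowerSeries.mk fun n =>
    if n % 2 = 0 then
      ((Nat.factorial n : ℚ))⁻¹ • ∏ r ∈ Finset.range (n / 2), ((a - (r : R)) * (b - (r : R)))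
    else 0

section Aux

set_option linter.unusedSectionVars false

variable {R : Type*} [CommRing R] [Algebra ℚ R]

lemma aux_coeff_d2 (f : R⟦X⟧) (n : ℕ) :
    coeff n (d⁄dX R (d⁄dX R f)) = coeff (n+2) f * (((n+2)*(n+1) : ℕ) : R) := by
  rw [coeff_derivative, coeff_derivative]; push_cast; ring

lemma aux_coeff_X_d (f : R⟦X⟧) (n : ℕ) :
    coeff n (X * d⁄dX R f) = coeff n f * ((n : ℕ) : R) := by
  cases n with
  | zero => simp [coeff_mul]
  | succ n =>
    rw [show X = (X:R⟦X⟧)^1 by ring, coeff_X_pow_mul, coeff_derivative]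
    push_cast; ring

lemma aux_coeff_X2_d2 (f : R⟦X⟧) (n : ℕ) :
    coeff n (X^2 * d⁄dX R (d⁄dX R f)) = coeff n f * ((n*(n-1) : ℕ) : R) := by
  match n with
  | 0 => simp [coeff_mul]
  | 1 => rw [coeff_X_pow_mul']; norm_num
  | (n+2) => rw [coeff_X_pow_mul, aux_coeff_d2]; norm_num

lemma aux_natsub (k : ℕ) : ((k*(k-1) : ℕ) : R) = (k:R)*(k:R) - (k:R) := by
  cases k with
  | zero => simp
  | succ k => push_cast [Nat.succ_sub_one]; ring

lemma aux_fact_key (m : ℕ) :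
    ((Nat.factorial (m+2) : ℚ))⁻¹ * (((m:ℚ)+2)*((m:ℚ)+1)) = ((Nat.factorial m : ℚ))⁻¹ := by
  rw [Nat.factorial_succ, Nat.factorial_succ]
  have h0 : (Nat.factorial m : ℚ) ≠ 0 := Nat.cast_ne_zero.2 (Nat.factorial_ne_zero m)
  field_simp
  push_cast
  ring

lemma aux_fact_keyR (m : ℕ) :
    algebraMap ℚ R ((Nat.factorial (m+2) : ℚ))⁻¹ * (((m:R)+2)*((m:R)+1))
      = algebraMap ℚ R ((Nat.factorial m : ℚ))⁻¹ := by
  have h : (((m:R)+2)*((m:R)+1)) = algebraMap ℚ R (((m:ℚ)+2)*((m:ℚ)+1)) := by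
    simp [map_mul, map_add, map_natCast, map_ofNat]
  rw [h, ← map_mul, aux_fact_key]

lemma aux_ode1 (a b : R) : (C 4 - X^2) * d⁄dX R (d⁄dX R (f₁ a b)) =
    C (4*(a*b)) * f₁ a b + C (2*(a+b)+1) * (X * d⁄dX R (f₁ a b)) := by
  ext n
  rw [sub_mul, map_sub, map_add, coeff_C_mul, aux_coeff_X2_d2, coeff_C_mul, coeff_C_mul,
    aux_coeff_X_d, aux_coeff_d2, aux_natsub]
  rcases Nat.even_or_odd n with ⟨m, rfl⟩ | ⟨m, rfl⟩
  · have h1 : coeff (m+m) (f₁ a b) =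
        ((Nat.factorial (m+m) : ℚ))⁻¹ • ∏ r ∈ Finset.range m, ((a + (r : R)) * (b + (r : R))) := by
      simp [f₁, coeff_mk, show (m+m) % 2 = 0 by omega, show (m+m)/2 = m by omega]
    have h2 : coeff (m+m+2) (f₁ a b) =
        ((Nat.factorial (m+m+2) : ℚ))⁻¹ •
          ((∏ r ∈ Finset.range m, ((a + (r : R)) * (b + (r : R)))) * ((a + (m:R)) * (b + (m:R)))) := by
      simp [f₁, coeff_mk, show (m+m+2) % 2 = 0 by omega, show (m+m+2)/2 = m+1 by omega,
        Finset.prod_range_succ]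
    rw [h1, h2, Algebra.smul_def, Algebra.smul_def]
    push_cast
    set P := ∏ r ∈ Finset.range m, ((a + (r : R)) * (b + (r : R))) with hP
    have key := aux_fact_keyR (R := R) (m+m)
    push_cast at key
    linear_combination (4 * P * ((a+(m:R))*(b+(m:R)))) * key
  · have h1 : coeff (2*m+1) (f₁ a b) = 0 := by
      simp [f₁, coeff_mk, show (2*m+1) % 2 = 1 by omega]
    have h2 : coeff (2*m+1+2) (f₁ a b) = 0 := by
      simp [f₁, coeff_mk, show (2*m+1+2) % 2 = 1 by omega]
    rw [h1, h2]
    ring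

lemma aux_ode3 (a b : R) : (C 4 - X^2) * d⁄dX R (d⁄dX R (f₃ a b)) =
    C (4*(a*b)) * f₃ a b + C (1-2*(a+b)) * (X * d⁄dX R (f₃ a b)) := by
  ext n
  rw [sub_mul, map_sub, map_add, coeff_C_mul, aux_coeff_X2_d2, coeff_C_mul, coeff_C_mul,
    aux_coeff_X_d, aux_coeff_d2, aux_natsub]
  rcases Nat.even_or_odd n with ⟨m, rfl⟩ | ⟨m, rfl⟩
  · have h1 : coeff (m+m) (f₃ a b) =
        ((Nat.factorial (m+m) : ℚ))⁻¹ • ∏ r ∈ Finset.range m, ((a - (r : R)) * (b - (r : R))) := by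
      simp [f₃, coeff_mk, show (m+m) % 2 = 0 by omega, show (m+m)/2 = m by omega]
    have h2 : coeff (m+m+2) (f₃ a b) =
        ((Nat.factorial (m+m+2) : ℚ))⁻¹ •
          ((∏ r ∈ Finset.range m, ((a - (r : R)) * (b - (r : R)))) * ((a - (m:R)) * (b - (m:R)))) := by
      simp [f₃, coeff_mk, show (m+m+2) % 2 = 0 by omega, show (m+m+2)/2 = m+1 by omega,
        Finset.prod_range_succ]
    rw [h1, h2, Algebra.smul_def, Algebra.smul_def]
    push_cast
    set P := ∏ r ∈ Finset.range m, ((a - (r : R)) * (b - (r : R))) with hP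
    have key := aux_fact_keyR (R := R) (m+m)
    push_cast at key
    linear_combination (4 * P * ((a-(m:R))*(b-(m:R)))) * key
  · have h1 : coeff (2*m+1) (f₃ a b) = 0 := by
      simp [f₃, coeff_mk, show (2*m+1) % 2 = 1 by omega]
    have h2 : coeff (2*m+1+2) (f₃ a b) = 0 := by
      simp [f₃, coeff_mk, show (2*m+1+2) % 2 = 1 by omega]
    rw [h1, h2]
    ring

lemma aux_ode2 (a b : R) : (C 4 - X^2) * d⁄dX R (d⁄dX R (f₂ a b)) =
    C (4*(a*b)) * f₂ a b + C (2*(a+b)+1) * (X * d⁄dX R (f₂ a b)) := by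
  have hh : algebraMap ℚ R (2⁻¹) + algebraMap ℚ R (2⁻¹) = 1 := by
    rw [← map_add]; norm_num
  set h : R := algebraMap ℚ R (2⁻¹) with hdef
  ext n
  rw [sub_mul, map_sub, map_add, coeff_C_mul, aux_coeff_X2_d2, coeff_C_mul, coeff_C_mul,
    aux_coeff_X_d, aux_coeff_d2, aux_natsub]
  rcases Nat.even_or_odd n with ⟨m, rfl⟩ | ⟨m, rfl⟩
  · have h1 : coeff (m+m) (f₂ a b) = 0 := by
      simp [f₂, coeff_mk, show (m+m) % 2 = 0 by omega]
    have h2 : coeff (m+m+2) (f₂ a b) = 0 := by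
      simp [f₂, coeff_mk, show (m+m+2) % 2 = 0 by omega]
    rw [h1, h2]
    ring
  · have h1 : coeff (2*m+1) (f₂ a b) =
        ((Nat.factorial (2*m+1) : ℚ))⁻¹ •
          ∏ r ∈ Finset.range m, ((a + (r : R) + h) * (b + (r : R) + h)) := by
      simp [f₂, coeff_mk, show (2*m+1) % 2 = 1 by omega, show (2*m+1)/2 = m by omega, hdef]
    have h2 : coeff (2*m+1+2) (f₂ a b) =
        ((Nat.factorial (2*m+1+2) : ℚ))⁻¹ •
          ((∏ r ∈ Finset.range m, ((a + (r : R) + h) * (b + (r : R) + h))) *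
            ((a + (m:R) + h) * (b + (m:R) + h))) := by
      simp [f₂, coeff_mk, show (2*m+1+2) % 2 = 1 by omega, show (2*m+1+2)/2 = m+1 by omega,
        Finset.prod_range_succ, hdef]
    rw [h1, h2, Algebra.smul_def, Algebra.smul_def]
    push_cast
    set P := ∏ r ∈ Finset.range m, ((a + (r : R) + h) * (b + (r : R) + h)) with hP
    have key := aux_fact_keyR (R := R) (2*m+1)
    push_cast at key
    set α := algebraMap ℚ R ((Nat.factorial (2*m+1) : ℚ))⁻¹ with hα
    linear_combination (4 * P * ((a+(m:R)+h)*(b+(m:R)+h))) * key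
      + (α*P)*(2*(a+b)+4*(m:R)+2*h+1) * hh

lemma aux_cast_cancel (k : ℕ) (hk : k ≠ 0) {x : R} (hx : x * ((k : ℕ) : R) = 0) : x = 0 := by
  have h1 : ((k:R)) = algebraMap ℚ R (k:ℚ) := by simp
  have h2 : ((k:R)) * algebraMap ℚ R ((k:ℚ))⁻¹ = 1 := by
    rw [h1, ← map_mul, mul_inv_cancel₀ (by exact_mod_cast hk), map_one]
  have h3 : x * (((k:R)) * algebraMap ℚ R ((k:ℚ))⁻¹) = 0 := by
    rw [← mul_assoc, hx, zero_mul]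
  rwa [h2, mul_one] at h3

lemma aux_ode_unique (e d : R) (p q : R⟦X⟧)
    (hp : (C 4 - X^2) * d⁄dX R (d⁄dX R p) = C e * p + C d * (X * d⁄dX R p))
    (hq : (C 4 - X^2) * d⁄dX R (d⁄dX R q) = C e * q + C d * (X * d⁄dX R q))
    (h0 : coeff 0 p = coeff 0 q) (h1 : coeff 1 p = coeff 1 q) : p = q := by
  ext n
  induction n using Nat.strong_induction_on with
  | _ n ih =>
    match n with
    | 0 => exact h0
    | 1 => exact h1
    | (n+2) =>
      have hpn := congrArg (coeff n) hp
      have hqn := congrArg (coeff n) hq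
      rw [sub_mul, map_sub, map_add, coeff_C_mul, aux_coeff_X2_d2, coeff_C_mul, coeff_C_mul,
        aux_coeff_X_d, aux_coeff_d2, aux_natsub] at hpn hqn
      have hn : coeff n p = coeff n q := ih n (by omega)
      have hΔ : (coeff (n+2) p - coeff (n+2) q) * (((4*((n+2)*(n+1)) : ℕ)) : R) = 0 := by
        push_cast
        push_cast at hpn hqn
        linear_combination hpn - hqn + (((n:R)*(n:R) - (n:R)) + e + d*(n:R)) * hn
      have := aux_cast_cancel _ (by positivity) hΔ
      exact sub_eq_zero.mp this

end Aux

/-- Equation (22) of the Lemma of Appendix B: `(f₂′·f₁ − f₁′·f₂)·f₃ = f₂′` in `R⟦x⟧`. -/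
theorem stmt0 {R : Type*} [CommRing R] [Algebra ℚ R] (a b : R) :
    (d⁄dX R (f₂ a b) * f₁ a b - d⁄dX R (f₁ a b) * f₂ a b) * f₃ a b = d⁄dX R (f₂ a b) := by
  have o1 := aux_ode1 a b
  have o2 := aux_ode2 a b
  have o3 := aux_ode3 a b
  set F1 := f₁ a b with hF1
  set F2 := f₂ a b with hF2
  set F3 := f₃ a b with hF3
  set W : R⟦X⟧ := d⁄dX R F2 * F1 - d⁄dX R F1 * F2 with hWdef
  have hdW : d⁄dX R W = d⁄dX R (d⁄dX R F2) * F1 - d⁄dX R (d⁄dX R F1) * F2 := by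
    rw [hWdef, map_sub, Derivation.leibniz, Derivation.leibniz, smul_eq_mul, smul_eq_mul,
      smul_eq_mul, smul_eq_mul]
    ring
  have hW : (C 4 - X^2) * d⁄dX R W = C (2*(a+b)+1) * (X * W) := by
    rw [hdW]
    linear_combination F1 * o2 - F2 * o1
  have hW2 : (C 4 - X^2) * d⁄dX R (d⁄dX R W) =
      C (2*(a+b)+1) * W + C (2*(a+b)+3) * (X * d⁄dX R W) := by
    have hD := congrArg (d⁄dX R) hW
    simp only [pow_two, map_sub, map_add, Derivation.leibniz, smul_eq_mul, derivative_X,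
      derivative_C, mul_one, mul_zero, zero_mul, add_zero, zero_add, map_mul] at hD
    simp only [map_add, map_mul, map_one, map_ofNat]
    simp only [map_add, map_mul, map_one, map_ofNat] at hD
    linear_combination hD
  have hg : (C 4 - X^2) * d⁄dX R (d⁄dX R (W * F3)) =
      C (4*(a*b)+2*(a+b)+1) * (W * F3) + C (2*(a+b)+3) * (X * d⁄dX R (W * F3)) := by
    have e1 : d⁄dX R (W * F3) = d⁄dX R W * F3 + W * d⁄dX R F3 := by
      rw [Derivation.leibniz, smul_eq_mul, smul_eq_mul]; ring
    have e2 : d⁄dX R (d⁄dX R (W * F3)) =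
        d⁄dX R (d⁄dX R W) * F3 + 2 * (d⁄dX R W * d⁄dX R F3) + W * d⁄dX R (d⁄dX R F3) := by
      rw [e1, map_add, Derivation.leibniz, Derivation.leibniz, smul_eq_mul, smul_eq_mul,
        smul_eq_mul, smul_eq_mul]
      ring
    rw [e2, e1]
    simp only [map_add, map_mul, map_one, map_ofNat, map_sub]
    simp only [map_add, map_mul, map_one, map_ofNat, map_sub] at hW hW2 o3
    linear_combination F3 * hW2 + 2 * (d⁄dX R F3) * hW + W * o3
  have hh2 : (C 4 - X^2) * d⁄dX R (d⁄dX R (d⁄dX R F2)) =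
      C (4*(a*b)+2*(a+b)+1) * (d⁄dX R F2) + C (2*(a+b)+3) * (X * d⁄dX R (d⁄dX R F2)) := by
    have hD := congrArg (d⁄dX R) o2
    simp only [pow_two, map_sub, map_add, Derivation.leibniz, smul_eq_mul, derivative_X,
      derivative_C, mul_one, mul_zero, zero_mul, add_zero, zero_add, map_mul] at hD
    simp only [map_add, map_mul, map_one, map_ofNat]
    simp only [map_add, map_mul, map_one, map_ofNat] at hD
    linear_combination hD
  refine aux_ode_unique (4*(a*b)+2*(a+b)+1) (2*(a+b)+3) _ _ hg hh2 ?_ ?_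
  · simp [hWdef, hF1, hF2, hF3, coeff_mul, f₁, f₂, f₃, coeff_derivative, coeff_mk,
      Finset.Nat.antidiagonal_zero]
  · have c10 : coeff 1 F1 = 0 := by simp [hF1, f₁, coeff_mk]
    have c20 : coeff 0 F2 = 0 := by simp [hF2, f₂, coeff_mk]
    have c22 : coeff 2 F2 = 0 := by simp [hF2, f₂, coeff_mk]
    have c31 : coeff 1 F3 = 0 := by simp [hF3, f₃, coeff_mk]
    have hco : coeff 1 W = 0 := by
      rw [hWdef, map_sub, coeff_mul, coeff_mul]
      simp [Finset.Nat.antidiagonal_succ, coeff_derivative, c10, c20, c22]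
    rw [coeff_mul]
    simp [Finset.Nat.antidiagonal_succ, coeff_derivative, hco, c31, c22]
end

section
/- Let R be a commutative ring that is a ℚ-algebra and let a, b ∈ R. With f₁, f₂, f₄ as below, the identity a·b·(f₂′·f₁ − f₁′·f₂)·f₄ = f₁′ holds in the formal power series ring R[[x]]. -/
open PowerSeries

noncomputable def f₄ {R : Type*} [CommRing R] [Algebra ℚ R] (a b : R) : R⟦X⟧ :=
  PowerSeries.mk fun n =>
    if n % 2 = 1 then
      ((Nat.factorial n : ℚ))⁻¹ • ∏ r ∈ Finset.range (n / 2),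
        ((a - (r : R) - algebraMap ℚ R (1/2)) * (b - (r : R) - algebraMap ℚ R (1/2)))
    else 0

section Aux
variable {R : Type*} [CommRing R] [Algebra ℚ R]

lemma cancel_natCast (m : ℕ) (hm : m ≠ 0) {x y : R} (h : (m : R) * x = (m : R) * y) : x = y := by
  have e : ∀ z : R, ((m : ℚ))⁻¹ • ((m : R) * z) = z := by
    intro z
    rw [show ((m : ℕ) : R) = algebraMap ℚ R (m : ℚ) from (map_natCast _ m).symm,
      ← Algebra.smul_def, smul_smul, inv_mul_cancel₀ (by exact_mod_cast hm), one_smul]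
  calc x = ((m:ℚ))⁻¹ • ((m : R) * x) := (e x).symm
    _ = ((m:ℚ))⁻¹ • ((m : R) * y) := by rw [h]
    _ = y := e y

set_option linter.unusedSectionVars false in
lemma ode_iff_rec (α β : R) (f : R⟦X⟧) :
    (4 - X^2 : R⟦X⟧) * d⁄dX R (d⁄dX R f) =
      C (2*α+2*β+1) * (X * d⁄dX R f) + C (4*(α*β)) * f ↔
    ∀ n : ℕ, ((4*(n+1)*(n+2) : ℕ) : R) * coeff (n+2) f
      = ((n : R)+2*α) * ((n : R)+2*β) * coeff n f := by
  rw [PowerSeries.ext_iff]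
  refine forall_congr' fun n => ?_
  have hc : ∀ m : ℕ, coeff m (d⁄dX R (d⁄dX R f)) = coeff (m+2) f * (((m:ℕ)+2)*((m:ℕ)+1) : ℕ) := by
    intro m
    rw [coeff_derivative, coeff_derivative]
    push_cast
    ring
  rw [sub_mul, map_sub, map_add, coeff_C_mul, coeff_C_mul,
    show (4 : R⟦X⟧) = C 4 from (map_ofNat _ 4).symm, coeff_C_mul,
    show (X : R⟦X⟧) * d⁄dX R f = X^1 * d⁄dX R f from by rw [pow_one],
    coeff_X_pow_mul', coeff_X_pow_mul', hc]
  match n with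
  | 0 =>
    norm_num
    constructor <;> intro h <;> push_cast at h ⊢ <;> linear_combination h
  | 1 =>
    norm_num [hc, coeff_derivative]
    constructor <;> intro h <;> push_cast at h ⊢ <;> linear_combination h
  | (m+2) =>
    rw [if_pos (by omega), if_pos (by omega), hc,
      show m+2-2 = m from rfl, show m+2-1 = m+1 from rfl, coeff_derivative]
    constructor <;> intro h <;> push_cast at h ⊢ <;> linear_combination h

lemma Rkey (j : ℕ) : ((4*(j+1)*(j+2) : ℕ) : R) * algebraMap ℚ R (((j+2).factorial : ℚ))⁻¹
    = 4 * algebraMap ℚ R ((j.factorial : ℚ))⁻¹ := by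
  have hq : ((4*(j+1)*(j+2) : ℕ) : ℚ) * (((j+2).factorial : ℚ))⁻¹
      = 4 * ((j.factorial : ℚ))⁻¹ := by
    have h1 : ((j+2).factorial : ℚ) = ((j:ℚ)+2) * ((j:ℚ)+1) * (j.factorial : ℚ) := by
      rw [show j+2 = (j+1)+1 from rfl, Nat.factorial_succ, Nat.factorial_succ]
      push_cast; ring
    have h0 : (j.factorial : ℚ) ≠ 0 := Nat.cast_ne_zero.2 j.factorial_ne_zero
    rw [h1]
    field_simp
    push_cast; ring
  have := congrArg (algebraMap ℚ R) hq
  rwa [map_mul, map_mul, map_natCast, map_ofNat] at this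

lemma hhalf : algebraMap ℚ R (1/2) + algebraMap ℚ R (1/2) = 1 := by
  rw [← map_add]; norm_num

lemma rec_f₁ (a b : R) (n : ℕ) :
    ((4*(n+1)*(n+2) : ℕ) : R) * coeff (n+2) (f₁ a b)
      = ((n : R)+2*a) * ((n : R)+2*b) * coeff n (f₁ a b) := by
  rcases Nat.even_or_odd n with ⟨k, hk⟩ | ⟨k, hk⟩
  · obtain rfl : n = 2*k := by omega
    have key := Rkey (R := R) (2*k)
    simp only [f₁, coeff_mk]
    rw [if_pos (by omega), if_pos (by omega), show (2*k+2)/2 = k+1 from by omega,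
      show (2*k)/2 = k from by omega, Finset.prod_range_succ,
      Algebra.smul_def, Algebra.smul_def]
    push_cast at key ⊢
    linear_combination ((∏ r ∈ Finset.range k, ((a + (r : R)) * (b + (r : R))))
      * ((a+(k:R))*(b+(k:R)))) * key
  · obtain rfl : n = 2*k+1 := by omega
    simp only [f₁, coeff_mk]
    rw [if_neg (by omega), if_neg (by omega), mul_zero, mul_zero]

lemma rec_f₂ (a b : R) (n : ℕ) :
    ((4*(n+1)*(n+2) : ℕ) : R) * coeff (n+2) (f₂ a b)
      = ((n : R)+2*a) * ((n : R)+2*b) * coeff n (f₂ a b) := by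
  rcases Nat.even_or_odd n with ⟨k, hk⟩ | ⟨k, hk⟩
  · obtain rfl : n = 2*k := by omega
    simp only [f₂, coeff_mk]
    rw [if_neg (by omega), if_neg (by omega), mul_zero, mul_zero]
  · obtain rfl : n = 2*k+1 := by omega
    have key := Rkey (R := R) (2*k+1)
    have hh := hhalf (R := R)
    simp only [f₂, coeff_mk]
    rw [if_pos (by omega), if_pos (by omega), show (2*k+1+2)/2 = k+1 from by omega,
      show (2*k+1)/2 = k from by omega, Finset.prod_range_succ,
      Algebra.smul_def, Algebra.smul_def]
    push_cast at key ⊢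
    set h : R := algebraMap ℚ R (1/2) with hhdef
    set P : R := ∏ r ∈ Finset.range k,
      ((a + (r : R) + h) * (b + (r : R) + h)) with hP
    set e : R := algebraMap ℚ R (((2*k+1).factorial : ℚ))⁻¹ with he
    linear_combination (P * ((a+(k:R)+h)*(b+(k:R)+h))) * key
      + (e * P * (2*a+2*b+4*(k:R)+2*h+1)) * hh

lemma rec_f₄ (a b : R) (n : ℕ) :
    ((4*(n+1)*(n+2) : ℕ) : R) * coeff (n+2) (f₄ a b)
      = ((n : R)+2*(-a)) * ((n : R)+2*(-b)) * coeff n (f₄ a b) := by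
  rcases Nat.even_or_odd n with ⟨k, hk⟩ | ⟨k, hk⟩
  · obtain rfl : n = 2*k := by omega
    simp only [f₄, coeff_mk]
    rw [if_neg (by omega), if_neg (by omega), mul_zero, mul_zero]
  · obtain rfl : n = 2*k+1 := by omega
    have key := Rkey (R := R) (2*k+1)
    have hh := hhalf (R := R)
    simp only [f₄, coeff_mk]
    rw [if_pos (by omega), if_pos (by omega), show (2*k+1+2)/2 = k+1 from by omega,
      show (2*k+1)/2 = k from by omega, Finset.prod_range_succ,
      Algebra.smul_def, Algebra.smul_def]
    push_cast at key ⊢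
    set h : R := algebraMap ℚ R (1/2) with hhdef
    set P : R := ∏ r ∈ Finset.range k,
      ((a - (r : R) - h) * (b - (r : R) - h)) with hP
    set e : R := algebraMap ℚ R (((2*k+1).factorial : ℚ))⁻¹ with he
    linear_combination (P * ((a-(k:R)-h)*(b-(k:R)-h))) * key
      + (e * P * (2*h+1-2*a-2*b+4*(k:R))) * hh

lemma eq_of_rec (α β : R) {g h : R⟦X⟧}
    (hg : ∀ n : ℕ, ((4*(n+1)*(n+2) : ℕ) : R) * coeff (n+2) g
      = ((n : R)+2*α) * ((n : R)+2*β) * coeff n g)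
    (hh : ∀ n : ℕ, ((4*(n+1)*(n+2) : ℕ) : R) * coeff (n+2) h
      = ((n : R)+2*α) * ((n : R)+2*β) * coeff n h)
    (h0 : coeff 0 g = coeff 0 h) (h1 : coeff 1 g = coeff 1 h) : g = h := by
  ext n
  induction n using Nat.strong_induction_on with
  | _ n ih =>
    match n with
    | 0 => exact h0
    | 1 => exact h1
    | (m+2) =>
      refine cancel_natCast (4*(m+1)*(m+2)) (by positivity) ?_
      rw [hg m, hh m, ih m (by omega)]

lemma unit_u : IsUnit (4 - X^2 : R⟦X⟧) := by
  rw [show (4 : R⟦X⟧) = C 4 from (map_ofNat _ 4).symm, PowerSeries.isUnit_iff_constantCoeff]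
  simp only [map_sub, map_pow, constantCoeff_X, constantCoeff_C]
  norm_num
  rw [show ((4:R)) = algebraMap ℚ R 4 from by rw [map_ofNat]]
  exact (isUnit_iff_ne_zero.2 (by norm_num : (4:ℚ) ≠ 0)).map _

end Aux


/-- Equation (23) of the Lemma of Appendix B: `a·b·(f₂′·f₁ − f₁′·f₂)·f₄ = f₁′` in `R⟦x⟧`. -/
theorem stmt1 {R : Type*} [CommRing R] [Algebra ℚ R] (a b : R) :
    C a * C b * (d⁄dX R (f₂ a b) * f₁ a b - d⁄dX R (f₁ a b) * f₂ a b) * f₄ a b =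
      d⁄dX R (f₁ a b) := by
  have hh' : C (algebraMap ℚ R (1/2)) + C (algebraMap ℚ R (1/2)) = 1 := by
    rw [← map_add, hhalf, map_one]
  have E1 := (ode_iff_rec a b (f₁ a b)).2 (rec_f₁ a b)
  have E2 := (ode_iff_rec a b (f₂ a b)).2 (rec_f₂ a b)
  have E4 := (ode_iff_rec (-a) (-b) (f₄ a b)).2 (rec_f₄ a b)
  have hDW : d⁄dX R (d⁄dX R (f₂ a b) * f₁ a b - d⁄dX R (f₁ a b) * f₂ a b)
      = d⁄dX R (d⁄dX R (f₂ a b)) * f₁ a b - d⁄dX R (d⁄dX R (f₁ a b)) * f₂ a b := by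
    rw [map_sub, Derivation.leibniz, Derivation.leibniz]
    simp only [smul_eq_mul]
    ring
  have EW : (4 - X^2 : R⟦X⟧) * d⁄dX R (d⁄dX R (f₂ a b) * f₁ a b - d⁄dX R (f₁ a b) * f₂ a b) = C (2*a+2*b+1) * (X * (d⁄dX R (f₂ a b) * f₁ a b - d⁄dX R (f₁ a b) * f₂ a b)) := by
    rw [hDW]
    linear_combination (f₁ a b) * E2 - (f₂ a b) * E1
  have hDu : d⁄dX R (4 - X^2 : R⟦X⟧) = -(2*X) := by
    rw [map_sub, show (4:R⟦X⟧) = C 4 from (map_ofNat _ 4).symm, derivative_C, pow_two]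
    simp only [Derivation.leibniz, smul_eq_mul, derivative_X, mul_one]
    ring
  have hdEW : (4 - X^2 : R⟦X⟧) * d⁄dX R (d⁄dX R (d⁄dX R (f₂ a b) * f₁ a b - d⁄dX R (f₁ a b) * f₂ a b))
      = 2*X*(d⁄dX R (d⁄dX R (f₂ a b) * f₁ a b - d⁄dX R (f₁ a b) * f₂ a b))
        + C (2*a+2*b+1) * ((d⁄dX R (f₂ a b) * f₁ a b - d⁄dX R (f₁ a b) * f₂ a b) + X * d⁄dX R (d⁄dX R (f₂ a b) * f₁ a b - d⁄dX R (f₁ a b) * f₂ a b)) := by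
    have h' := congrArg (d⁄dX R) EW
    simp only [Derivation.leibniz, smul_eq_mul, derivative_C, derivative_X, hDu,
      mul_zero, add_zero, zero_mul, zero_add, mul_one] at h'
    linear_combination h'
  have EW2 : (4 - X^2 : R⟦X⟧) * ((4 - X^2 : R⟦X⟧) * d⁄dX R (d⁄dX R (d⁄dX R (f₂ a b) * f₁ a b - d⁄dX R (f₁ a b) * f₂ a b)))
      = C (2*a+2*b+1) * ((4 + C (2*a+2*b+2) * X^2) * (d⁄dX R (f₂ a b) * f₁ a b - d⁄dX R (f₁ a b) * f₂ a b)) := by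
    simp only [map_add, map_mul, map_one, map_ofNat] at EW hdEW ⊢
    linear_combination (4 - X^2 : R⟦X⟧) * hdEW + (2*X + (2*C a+2*C b+1)*X) * EW
  have hDg : d⁄dX R (C a * C b * (d⁄dX R (f₂ a b) * f₁ a b - d⁄dX R (f₁ a b) * f₂ a b) * f₄ a b)
      = C a * C b * (d⁄dX R (d⁄dX R (f₂ a b) * f₁ a b - d⁄dX R (f₁ a b) * f₂ a b) * f₄ a b + (d⁄dX R (f₂ a b) * f₁ a b - d⁄dX R (f₁ a b) * f₂ a b) * d⁄dX R (f₄ a b)) := by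
    simp only [Derivation.leibniz, smul_eq_mul, derivative_C]
    ring
  have hD2g : d⁄dX R (d⁄dX R (C a * C b * (d⁄dX R (f₂ a b) * f₁ a b - d⁄dX R (f₁ a b) * f₂ a b) * f₄ a b))
      = C a * C b * (d⁄dX R (d⁄dX R (d⁄dX R (f₂ a b) * f₁ a b - d⁄dX R (f₁ a b) * f₂ a b)) * f₄ a b
        + 2*(d⁄dX R (d⁄dX R (f₂ a b) * f₁ a b - d⁄dX R (f₁ a b) * f₂ a b) * d⁄dX R (f₄ a b)) + (d⁄dX R (f₂ a b) * f₁ a b - d⁄dX R (f₁ a b) * f₂ a b) * d⁄dX R (d⁄dX R (f₄ a b))) := by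
    rw [hDg]
    simp only [map_add, map_mul, Derivation.leibniz, smul_eq_mul, derivative_C]
    ring
  have Eg : (4 - X^2 : R⟦X⟧) * d⁄dX R (d⁄dX R (C a * C b * (d⁄dX R (f₂ a b) * f₁ a b - d⁄dX R (f₁ a b) * f₂ a b) * f₄ a b))
      = C (2*(a + algebraMap ℚ R (1/2))+2*(b + algebraMap ℚ R (1/2))+1) * (X * d⁄dX R (C a * C b * (d⁄dX R (f₂ a b) * f₁ a b - d⁄dX R (f₁ a b) * f₂ a b) * f₄ a b))
        + C (4*((a + algebraMap ℚ R (1/2))*(b + algebraMap ℚ R (1/2)))) * (C a * C b * (d⁄dX R (f₂ a b) * f₁ a b - d⁄dX R (f₁ a b) * f₂ a b) * f₄ a b) := by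
    refine (unit_u (R := R)).mul_left_cancel ?_
    rw [hD2g, hDg]
    simp only [map_add, map_mul, map_neg, map_one, map_ofNat] at E4 EW EW2 ⊢
    linear_combination (C a * C b * f₄ a b) * EW2
      + (C a * C b * (2*(4 - X^2 : R⟦X⟧)*(d⁄dX R (f₄ a b))
          - (2*C a+2*C b+4*C (algebraMap ℚ R (1/2))+1)*X*(f₄ a b))) * EW
      + (C a * C b * (4 - X^2 : R⟦X⟧) * (d⁄dX R (f₂ a b) * f₁ a b - d⁄dX R (f₁ a b) * f₂ a b)) * E4
      + (-(2*C a*C b*(4 - X^2 : R⟦X⟧)*(d⁄dX R (f₂ a b) * f₁ a b - d⁄dX R (f₁ a b) * f₂ a b)*X*(d⁄dX R (f₄ a b)))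
          - C a*C b*(f₄ a b)*(d⁄dX R (f₂ a b) * f₁ a b - d⁄dX R (f₁ a b) * f₂ a b)*(4 - X^2 : R⟦X⟧)*(2*C a+2*C b+2*C (algebraMap ℚ R (1/2))+1)
          - 2*C a*C b*(f₄ a b)*(d⁄dX R (f₂ a b) * f₁ a b - d⁄dX R (f₁ a b) * f₂ a b)*(2*C a+2*C b+1)*X^2) * hh'
  have Eh : (4 - X^2 : R⟦X⟧) * d⁄dX R (d⁄dX R (d⁄dX R (f₁ a b)))
      = C (2*(a + algebraMap ℚ R (1/2))+2*(b + algebraMap ℚ R (1/2))+1) * (X * d⁄dX R (d⁄dX R (f₁ a b)))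
        + C (4*((a + algebraMap ℚ R (1/2))*(b + algebraMap ℚ R (1/2)))) * (d⁄dX R (f₁ a b)) := by
    have h' := congrArg (d⁄dX R) E1
    simp only [map_add, Derivation.leibniz, smul_eq_mul, derivative_C, derivative_X, hDu,
      mul_zero, add_zero, zero_mul, zero_add, mul_one] at h'
    simp only [map_add, map_mul, map_neg, map_one, map_ofNat] at h' ⊢
    linear_combination h' - (2*X*(d⁄dX R (d⁄dX R (f₁ a b)))
      + (2*C a+2*C b+2*C (algebraMap ℚ R (1/2))+1) * d⁄dX R (f₁ a b)) * hh'
  -- initial coefficients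
  have c1f₁ : coeff 1 (f₁ a b) = 0 := by simp [f₁]
  have c0f₁ : coeff 0 (f₁ a b) = 1 := by simp [f₁]
  have c1f₂ : coeff 1 (f₂ a b) = 1 := by simp [f₂]
  have c0f₂ : coeff 0 (f₂ a b) = 0 := by simp [f₂]
  have c0f₄ : coeff 0 (f₄ a b) = 0 := by simp [f₄]
  have c1f₄ : coeff 1 (f₄ a b) = 1 := by simp [f₄]
  have c2f₁ : coeff 2 (f₁ a b) = algebraMap ℚ R ((2:ℚ))⁻¹ * (a * b) := by
    simp [f₁, Algebra.smul_def, Nat.factorial]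
  have htwo : algebraMap ℚ R ((2:ℚ))⁻¹ * 2 = 1 := by
    rw [show ((2:R)) = algebraMap ℚ R 2 from by rw [map_ofNat], ← map_mul]
    norm_num
  have cd0 : coeff 0 (d⁄dX R (f₁ a b)) = 0 := by
    rw [coeff_derivative, show (0+1 : ℕ) = 1 from rfl, c1f₁, zero_mul]
  have cd1 : coeff 1 (d⁄dX R (f₁ a b)) = a * b := by
    rw [coeff_derivative, show (1+1 : ℕ) = 2 from rfl, c2f₁]
    push_cast
    linear_combination (a*b) * htwo
  have cW0 : coeff 0 ((d⁄dX R (f₂ a b) * f₁ a b - d⁄dX R (f₁ a b) * f₂ a b)) = 1 := by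
    rw [map_sub, coeff_zero_eq_constantCoeff, map_mul, map_mul,
      ← coeff_zero_eq_constantCoeff_apply, ← coeff_zero_eq_constantCoeff_apply,
      ← coeff_zero_eq_constantCoeff_apply, ← coeff_zero_eq_constantCoeff_apply,
      c0f₁, c0f₂, coeff_derivative, coeff_derivative,
      show (0+1 : ℕ) = 1 from rfl, c1f₁, c1f₂]
    push_cast
    ring
  have cc0f₄ : constantCoeff (f₄ a b) = 0 := by
    rw [← coeff_zero_eq_constantCoeff_apply]; exact c0f₄
  have c0 : coeff 0 (C a * C b * (d⁄dX R (f₂ a b) * f₁ a b - d⁄dX R (f₁ a b) * f₂ a b) * f₄ a b) = coeff 0 (d⁄dX R (f₁ a b)) := by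
    rw [cd0, coeff_zero_eq_constantCoeff, map_mul, cc0f₄, mul_zero]
  have c1 : coeff 1 (C a * C b * (d⁄dX R (f₂ a b) * f₁ a b - d⁄dX R (f₁ a b) * f₂ a b) * f₄ a b) = coeff 1 (d⁄dX R (f₁ a b)) := by
    rw [cd1, coeff_mul, Finset.Nat.sum_antidiagonal_eq_sum_range_succ_mk,
      Finset.sum_range_succ, Finset.sum_range_one]
    simp only [show (1-0 : ℕ) = 1 from rfl, show (1-1 : ℕ) = 0 from rfl]
    have ccW0 : constantCoeff (d⁄dX R (f₂ a b) * f₁ a b - d⁄dX R (f₁ a b) * f₂ a b) = 1 := by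
      rw [← coeff_zero_eq_constantCoeff_apply]; exact cW0
    rw [c0f₄, c1f₄, mul_zero, add_zero, mul_one, coeff_zero_eq_constantCoeff, map_mul, map_mul,
      constantCoeff_C, constantCoeff_C, ccW0, mul_one]
  exact eq_of_rec (a + algebraMap ℚ R (1/2)) (b + algebraMap ℚ R (1/2))
    ((ode_iff_rec (a + algebraMap ℚ R (1/2)) (b + algebraMap ℚ R (1/2)) _).1 Eg)
    ((ode_iff_rec (a + algebraMap ℚ R (1/2)) (b + algebraMap ℚ R (1/2)) _).1 Eh) c0 c1
end

section
/- Let R be a commutative ring that is a ℚ-algebra and let a, b ∈ R. The power series f₁ satisfies the formal differential equation (x²/4 − 1)·f₁″ + (1/4 + (a+b)/2)·x·f₁′ + a·b·f₁ = 0 in R[[x]]. -/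
open PowerSeries

/-- `f₁` satisfies `(x²/4 − 1)·f₁″ + (1/4 + (a+b)/2)·x·f₁′ + a·b·f₁ = 0`. -/
theorem stmt2 {R : Type*} [CommRing R] [Algebra ℚ R] (a b : R) :
    ((1/4 : ℚ) • (PowerSeries.X : R⟦X⟧) ^ 2 - 1) * d⁄dX R (d⁄dX R (f₁ a b)) +
      ((1/4 : ℚ) • (1 : R⟦X⟧) + (1/2 : ℚ) • C (a + b)) * PowerSeries.X * d⁄dX R (f₁ a b) +
      C (a * b) * f₁ a b = 0 := by
  have h2 : (2 : R) * algebraMap ℚ R (1/2) = 1 := by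
    rw [← map_ofNat (algebraMap ℚ R) 2, ← map_mul, ← map_one (algebraMap ℚ R)]
    norm_num
  have h4 : (4 : R) * algebraMap ℚ R (1/4) = 1 := by
    rw [← map_ofNat (algebraMap ℚ R) 4, ← map_mul, ← map_one (algebraMap ℚ R)]
    norm_num
  ext n
  simp only [map_add, map_sub, sub_mul, add_mul, one_mul, coeff_C_mul, mul_assoc,
    smul_mul_assoc, coeff_smul, map_zero, coeff_zero_eq_constantCoeff]
  rcases n with _ | _ | n
  · simp only [coeff_zero_eq_constantCoeff.symm, coeff_zero_X_mul, map_pow,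
      constantCoeff_X, coeff_derivative, f₁, coeff_mk]
    norm_num [Algebra.smul_def]
    linear_combination (-(a * b)) * h2
  · have hx2 : (coeff 1) ((X : R⟦X⟧) ^ 2 * (d⁄dX R ((d⁄dX R) (f₁ a b)))) = 0 := by
      rw [coeff_X_pow_mul']; simp
    rw [hx2, coeff_succ_X_mul]
    simp [f₁, coeff_derivative, coeff_mk, Nat.reduceMod]
  · have hx2 : (coeff (n + 2)) ((X : R⟦X⟧) ^ 2 * (d⁄dX R ((d⁄dX R) (f₁ a b)))) =
        (coeff n) (d⁄dX R ((d⁄dX R) (f₁ a b))) := coeff_X_pow_mul _ 2 n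
    rw [hx2, coeff_succ_X_mul]
    simp only [coeff_derivative, f₁, coeff_mk]
    rcases Nat.even_or_odd n with ⟨k, rfl⟩ | ⟨k, rfl⟩
    · have e1 : (k + k) % 2 = 0 := by omega
      have e2 : (k + k + 2) % 2 = 0 := by omega
      have e3 : (k + k + 2 + 2) % 2 = 0 := by omega
      have d2 : (k + k + 2) / 2 = k + 1 := by omega
      have d3 : (k + k + 2 + 2) / 2 = k + 2 := by omega
      rw [if_pos e2, if_pos e3, d2, d3, Finset.prod_range_succ (n := k + 1)]
      have hfac : algebraMap ℚ R (((k + k + 2 + 2).factorial : ℚ))⁻¹ *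
          (((k + k + 2 + 2 : ℕ) : R) * ((k + k + 2 + 1 : ℕ) : R)) =
          algebraMap ℚ R (((k + k + 2).factorial : ℚ))⁻¹ := by
        rw [← map_natCast (algebraMap ℚ R), ← map_natCast (algebraMap ℚ R), ← map_mul, ← map_mul]
        congr 1
        have : (k + k + 2 + 2).factorial = (k + k + 2).factorial * ((k+k+2+1) * (k+k+2+2)) := by
          rw [show k+k+2+2 = (k+k+2) + 2 by ring]
          simp [Nat.factorial_succ]; ring
        rw [this]
        have h1 : ((k + k + 2).factorial : ℚ) ≠ 0 := by positivity
        push_cast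
        field_simp
      simp only [Algebra.smul_def]
      push_cast at hfac ⊢
      linear_combination (algebraMap ℚ R (((k + k + 2).factorial : ℚ))⁻¹ *
          ((∏ r ∈ Finset.range (k + 1), ((a + (r : R)) * (b + (r : R)))) *
            ((k:R) + 1)^2)) * h4 +
        (algebraMap ℚ R (((k + k + 2).factorial : ℚ))⁻¹ *
          ((∏ r ∈ Finset.range (k + 1), ((a + (r : R)) * (b + (r : R)))) *
            (a + b) * ((k:R) + 1))) * h2 +
        (-((∏ r ∈ Finset.range (k + 1), ((a + (r : R)) * (b + (r : R)))) *
            (a + ((k:R) + 1)) * (b + ((k:R) + 1)))) * hfac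
    · have e2 : (2 * k + 1 + 2) % 2 = 1 := by omega
      have e3 : (2 * k + 1 + 2 + 2) % 2 = 1 := by omega
      simp [e2, e3]
end

section
/- Let R be a commutative ring that is a ℚ-algebra and let a, b ∈ R. The power series f₂ satisfies the formal differential equation (x²/4 − 1)·f₂″ + (1/4 + (a+b)/2)·x·f₂′ + a·b·f₂ = 0 in R[[x]]. -/
open PowerSeries

section helpers
variable {R : Type*} [CommRing R] [Algebra ℚ R] (a b : R)

noncomputable def Pf (a b : R) (m : ℕ) : R :=
  ∏ r ∈ Finset.range m, ((a + (r : R) + algebraMap ℚ R (1/2)) * (b + (r : R) + algebraMap ℚ R (1/2)))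

lemma f2_even (m : ℕ) (hm : m % 2 = 0) : coeff m (f₂ a b) = 0 := by
  simp [f₂, hm]

lemma d2_even (m : ℕ) (hm : m % 2 = 0) : coeff m (d⁄dX R (d⁄dX R (f₂ a b))) = 0 := by
  rw [coeff_derivative, coeff_derivative, f2_even a b _ (by omega), zero_mul, zero_mul]

lemma d1_odd (m : ℕ) (hm : m % 2 = 1) : coeff m (d⁄dX R (f₂ a b)) = 0 := by
  rw [coeff_derivative, f2_even a b _ (by omega), zero_mul]

lemma f2_odd (m : ℕ) : coeff (2*m+1) (f₂ a b)
    = (((2*m+1).factorial : ℚ))⁻¹ • Pf a b m := by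
  have h1 : (2*m+1) % 2 = 1 := by omega
  have h2 : (2*m+1) / 2 = m := by omega
  simp [f₂, Pf, h1, h2]

lemma dd_coeff (m : ℕ) : coeff (2*m+1) (d⁄dX R (d⁄dX R (f₂ a b)))
    = (((2*(m+1)+1).factorial : ℚ))⁻¹ • Pf a b (m+1) * ((2*(m:R)+3) * (2*(m:R)+2)) := by
  rw [coeff_derivative, coeff_derivative, show 2*m+1+1+1 = 2*(m+1)+1 from by ring, f2_odd]
  push_cast
  ring

lemma d1_coeff (m : ℕ) : coeff (2*m+2) (d⁄dX R (f₂ a b))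
    = (((2*(m+1)+1).factorial : ℚ))⁻¹ • Pf a b (m+1) * (2*(m:R)+3) := by
  rw [coeff_derivative, show 2*m+2+1 = 2*(m+1)+1 from by ring, f2_odd]
  push_cast
  ring

end helpers

/-- `f₂` satisfies `(x²/4 − 1)·f₂″ + (1/4 + (a+b)/2)·x·f₂′ + a·b·f₂ = 0`. -/
theorem stmt3 {R : Type*} [CommRing R] [Algebra ℚ R] (a b : R) :
    ((1/4 : ℚ) • (PowerSeries.X : R⟦X⟧) ^ 2 - 1) * d⁄dX R (d⁄dX R (f₂ a b)) +
      ((1/4 : ℚ) • (1 : R⟦X⟧) + (1/2 : ℚ) • C (a + b)) * PowerSeries.X * d⁄dX R (f₂ a b) +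
      C (a * b) * f₂ a b = 0 := by
  ext n
  rw [sub_mul, smul_mul_assoc, one_mul, add_mul, add_mul, smul_mul_assoc, smul_mul_assoc,
      one_mul, smul_mul_assoc, smul_mul_assoc, mul_assoc]
  simp only [map_zero, map_add, map_sub, add_mul, coeff_smul, coeff_C_mul]
  rcases Nat.even_or_odd' n with ⟨k, hk | hk⟩ <;> subst hk
  · -- even case n = 2k
    have hXg : coeff (2*k) (X * d⁄dX R (f₂ a b)) = 0 := by
      cases k with
      | zero => simpa using coeff_zero_X_mul _
      | succ k =>
        rw [show 2*(k+1) = (2*k+1)+1 by ring, coeff_succ_X_mul, d1_odd a b _ (by omega)]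
    have hX2 : coeff (2*k) (X^2 * d⁄dX R (d⁄dX R (f₂ a b))) = 0 := by
      rw [coeff_X_pow_mul']
      split_ifs with hle
      · exact d2_even a b _ (by omega)
      · rfl
    rw [hXg, hX2, d2_even a b _ (by omega), f2_even a b _ (by omega)]
    simp
  · -- odd case n = 2k+1
    cases k with
    | zero =>
      have A1 : coeff (2*0+1) (X^2 * (d⁄dX R (d⁄dX R (f₂ a b)))) = 0 := by
        rw [coeff_X_pow_mul']
        norm_num
      have A3 : coeff (2*0+1) (X * (d⁄dX R (f₂ a b)))
          = (((2*0+1).factorial : ℚ))⁻¹ • Pf a b 0 := by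
        conv_lhs => rw [show 2*0+1 = 0+1 from rfl, coeff_succ_X_mul, coeff_derivative,
          show (0:ℕ)+1 = 2*0+1 from rfl]
        rw [f2_odd]
        push_cast
        ring
      rw [A1, A3, dd_coeff a b 0, f2_odd a b 0]
      have q4 : algebraMap ℚ R (1/4) = algebraMap ℚ R (1/2) * algebraMap ℚ R (1/2) := by
        rw [← map_mul]; norm_num
      have hf1 : (((2*0+1).factorial : ℚ))⁻¹ = 1 := by norm_num
      have hP0 : Pf a b 0 = 1 := by simp [Pf]
      have hP1 : Pf a b 1 = (a + (0:R) + algebraMap ℚ R (1/2)) * (b + (0:R) + algebraMap ℚ R (1/2)) := by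
        simp [Pf]
      have h6 : algebraMap ℚ R ((((2*(0+1)+1).factorial : ℚ))⁻¹) * 6 = 1 := by
        rw [show ((6:R)) = algebraMap ℚ R 6 from (map_ofNat (algebraMap ℚ R) 6).symm, ← map_mul]
        norm_num [Nat.factorial]
      rw [hf1, hP0, hP1]
      simp only [Algebra.smul_def, q4, map_one]
      linear_combination (norm := (push_cast; ring))
        (-((a + algebraMap ℚ R (1/2)) * (b + algebraMap ℚ R (1/2)))) * h6
    | succ k =>
      have A1 : coeff (2*(k+1)+1) (X^2 * (d⁄dX R (d⁄dX R (f₂ a b))))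
          = (((2*(k+1)+1).factorial : ℚ))⁻¹ • Pf a b (k+1) * ((2*(k:R)+3) * (2*(k:R)+2)) := by
        conv_lhs => rw [show 2*(k+1)+1 = (2*k+1)+2 from by ring, coeff_X_pow_mul]
        exact dd_coeff a b k
      have A3 : coeff (2*(k+1)+1) (X * (d⁄dX R (f₂ a b)))
          = (((2*(k+1)+1).factorial : ℚ))⁻¹ • Pf a b (k+1) * (2*(k:R)+3) := by
        conv_lhs => rw [show 2*(k+1)+1 = (2*k+2)+1 from by ring, coeff_succ_X_mul]
        exact d1_coeff a b k
      have hP : Pf a b (k+2) = Pf a b (k+1) *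
          ((a + ((k:R)+1) + algebraMap ℚ R (1/2)) * (b + ((k:R)+1) + algebraMap ℚ R (1/2))) := by
        simp [Pf, Finset.prod_range_succ]
      rw [A1, A3, dd_coeff a b (k+1), f2_odd a b (k+1), hP]
      have q4 : algebraMap ℚ R (1/4) = algebraMap ℚ R (1/2) * algebraMap ℚ R (1/2) := by
        rw [← map_mul]; norm_num
      have h1 : algebraMap ℚ R (1/2) + algebraMap ℚ R (1/2) = 1 := by
        rw [← map_add]; norm_num
      have hfac : algebraMap ℚ R ((((2*(k+2)+1).factorial : ℚ))⁻¹) * ((2*(k:R)+4)*(2*(k:R)+5))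
          = algebraMap ℚ R ((((2*(k+1)+1).factorial : ℚ))⁻¹) := by
        have e1 : ((2*(k:R)+4)*(2*(k:R)+5)) = algebraMap ℚ R ((2*(k:ℚ)+4)*(2*(k:ℚ)+5)) := by
          simp [map_mul, map_add, map_ofNat]
        rw [e1, ← map_mul]
        congr 1
        rw [show 2*(k+2)+1 = (2*(k+1)+1)+1+1 from by ring, Nat.factorial_succ, Nat.factorial_succ]
        have h0 : ((2*(k+1)+1).factorial : ℚ) ≠ 0 := Nat.cast_ne_zero.2 (Nat.factorial_ne_zero _)
        field_simp
        push_cast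
        ring
      simp only [Algebra.smul_def, q4]
      linear_combination (norm := (push_cast; ring))
        (-(Pf a b (k+1) * ((a + ((k:R)+1) + algebraMap ℚ R (1/2)) * (b + ((k:R)+1) + algebraMap ℚ R (1/2))))) * hfac
        + (algebraMap ℚ R ((((2*(k+1)+1).factorial : ℚ))⁻¹) * Pf a b (k+1) * ((k:R)+1)
            * (a + b + algebraMap ℚ R (1/2)*(2*(k:R)+4) + (k:R) + 1)) * h1
end

section
/- Let R be a commutative ring that is a ℚ-algebra and let a, b ∈ R. Set g = f₂′, the formal derivative of f₂. Then g satisfies the formal differential equation (x²/4 − 1)·g″ + (3/4 + (a+b)/2)·x·g′ + (a + 1/2)·(b + 1/2)·g = 0 in R[[x]]. -/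
open PowerSeries

lemma cf2o {R : Type*} [CommRing R] [Algebra ℚ R] (a b : R) (n : ℕ) (h : n % 2 = 1) :
    (coeff n) (f₂ a b) = ((Nat.factorial n : ℚ))⁻¹ • ∏ r ∈ Finset.range (n / 2),
        ((a + (r : R) + algebraMap ℚ R (1/2)) * (b + (r : R) + algebraMap ℚ R (1/2))) := by
  simp [f₂, coeff_mk, h]

lemma cf2e {R : Type*} [CommRing R] [Algebra ℚ R] (a b : R) (n : ℕ) (h : n % 2 = 0) :
    (coeff n) (f₂ a b) = 0 := by
  simp [f₂, coeff_mk]; omega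

/-- `g = f₂′` satisfies `(x²/4 − 1)·g″ + (3/4 + (a+b)/2)·x·g′ + (a+1/2)(b+1/2)·g = 0`. -/
theorem stmt4 {R : Type*} [CommRing R] [Algebra ℚ R] (a b : R) :
    ((1/4 : ℚ) • (PowerSeries.X : R⟦X⟧) ^ 2 - 1) * d⁄dX R (d⁄dX R (d⁄dX R (f₂ a b))) +
      ((3/4 : ℚ) • (1 : R⟦X⟧) + (1/2 : ℚ) • C (a + b)) * PowerSeries.X *
        d⁄dX R (d⁄dX R (f₂ a b)) +
      (C a + (1/2 : ℚ) • (1 : R⟦X⟧)) * (C b + (1/2 : ℚ) • (1 : R⟦X⟧)) *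
        d⁄dX R (f₂ a b) = 0 := by
  ext n
  simp only [sub_mul, add_mul, mul_assoc, smul_mul_assoc, one_mul, mul_one, map_add, map_sub,
    coeff_smul, coeff_C_mul, map_zero, coeff_derivative]
  rcases Nat.even_or_odd n with ⟨m, rfl⟩ | ⟨m, rfl⟩
  · -- even case n = m + m
    rcases m with _ | m
    · -- n = 0
      norm_num
      rw [cf2o a b 1 rfl, cf2o a b 3 rfl]
      norm_num [Finset.prod_range_one, Nat.factorial]
      simp only [Algebra.smul_def]
      have e6 : algebraMap ℚ R (1/6 : ℚ) * 6 = 1 := by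
        rw [show ((6:R)) = algebraMap ℚ R 6 from (map_ofNat _ 6).symm, ← map_mul]; norm_num
      linear_combination (-((a + algebraMap ℚ R (1/2)) * (b + algebraMap ℚ R (1/2)))) * e6
    · -- n = 2m+2
      have hn : m + 1 + (m + 1) = 2*m + 1 + 1 := by ring
      rw [hn, coeff_succ_X_mul, show (2*m+1+1 : ℕ) = 2*m + 2 from rfl,
        coeff_X_pow_mul]
      simp only [coeff_derivative]
      rw [show (2*m+2+1 : ℕ) = 2*(m+1)+1 from by ring, show (2*m+1+1 : ℕ) = 2*(m+1) from by ring,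
        show (2*(m+1)+1+1+1 : ℕ) = 2*(m+2)+1 from by ring,
        cf2o a b (2*(m+1)+1) (by omega), cf2o a b (2*(m+2)+1) (by omega),
        show (2*(m+2)+1)/2 = m+2 from by omega, show (2*(m+1)+1)/2 = m+1 from by omega,
        show m+2 = (m+1)+1 from rfl, Finset.prod_range_succ]
      simp only [Algebra.smul_def, Finset.prod_range_succ]
      push_cast
      have e4 : algebraMap ℚ R (1/4) = algebraMap ℚ R (1/2) * algebraMap ℚ R (1/2) := by
        rw [← map_mul]; norm_num
      have e34 : algebraMap ℚ R (3/4) = 3 * (algebraMap ℚ R (1/2) * algebraMap ℚ R (1/2)) := by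
        rw [← map_mul, (map_ofNat (algebraMap ℚ R) 3).symm, ← map_mul]; norm_num
      have e2 : algebraMap ℚ R (1/2) + algebraMap ℚ R (1/2) = 1 := by
        rw [← map_add]; norm_num
      have efact : algebraMap ℚ R ((((2*(m+1+1)+1).factorial : ℚ))⁻¹) * ((2*(m:R)+5) * (2*(m:R)+4))
          = algebraMap ℚ R ((((2*(m+1)+1).factorial : ℚ))⁻¹) := by
        have h1 : (((2*(m+1+1)+1).factorial : ℚ))⁻¹ * ((2*(m:ℚ)+5) * (2*(m:ℚ)+4))
            = (((2*(m+1)+1).factorial : ℚ))⁻¹ := by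
          rw [show 2*(m+1+1)+1 = (2*(m+1)+1)+1+1 from by ring, Nat.factorial_succ,
            Nat.factorial_succ]
          have h0 : ((2*(m+1)+1).factorial : ℚ) ≠ 0 :=
            Nat.cast_ne_zero.mpr (Nat.factorial_ne_zero _)
          push_cast; field_simp; ring
        have h2 : algebraMap ℚ R (2*(m:ℚ)+5) = 2*(m:R)+5 := by simp [map_ofNat]
        have h3 : algebraMap ℚ R (2*(m:ℚ)+4) = 2*(m:R)+4 := by simp [map_ofNat]
        rw [← h1, map_mul, map_mul, h2, h3]
      set M : R := (m : R) with hM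
      set H : R := algebraMap ℚ R (1/2) with hH
      set Pm : R := ∏ x ∈ Finset.range m, ((a + (x:R) + H) * (b + (x:R) + H)) with hPm
      set C3 : R := algebraMap ℚ R ((((2*(m+1)+1).factorial : ℚ))⁻¹) with hC3
      set C5 : R := algebraMap ℚ R ((((2*(m+1+1)+1).factorial : ℚ))⁻¹) with hC5
      rw [e4, e34]
      linear_combination (-(Pm*((a+M+H)*(b+M+H))*((a+(M+1)+H)*(b+(M+1)+H))*(2*M+3))) * efact
        + (C3*Pm*((a+M+H)*(b+M+H))*(2*M+3)*((2*H+1)*(M+1)*(M+2) + (M+1)*(a+b) - (M+1))) * e2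
  · -- odd case n = 2m+1
    rw [coeff_succ_X_mul]
    simp only [coeff_derivative]
    rw [cf2e a b (2*m+1+1) (by omega), cf2e a b (2*m+1+1+1+1) (by omega)]
    rcases m with _ | m
    · have h1 : (coeff 1) (X^2 * (d⁄dX R) ((d⁄dX R) ((d⁄dX R) (f₂ a b)))) = 0 := by
        rw [pow_two, mul_assoc, show (1:ℕ) = 0 + 1 from rfl, coeff_succ_X_mul]
        simp [coeff_zero_eq_constantCoeff, map_mul]
      rw [show (2*0+1:ℕ) = 1 from rfl, h1]
      simp
    · rw [show 2*(m+1)+1 = (2*m+1) + 2 from by ring, coeff_X_pow_mul]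
      simp only [coeff_derivative]
      rw [cf2e a b (2*m+1+1+1+1) (by omega)]
      simp
end

section
/- Let R be a commutative ring that is a ℚ-algebra and let a, b ∈ R. The power series f₃ satisfies the formal differential equation (x²/4 − 1)·f₃″ + (1/4 − (a+b)/2)·x·f₃′ + a·b·f₃ = 0 in R[[x]]. -/
open PowerSeries

/-- `f₃` satisfies `(x²/4 − 1)·f₃″ + (1/4 − (a+b)/2)·x·f₃′ + a·b·f₃ = 0`. -/
theorem stmt5 {R : Type*} [CommRing R] [Algebra ℚ R] (a b : R) :
    ((1/4 : ℚ) • (PowerSeries.X : R⟦X⟧) ^ 2 - 1) * d⁄dX R (d⁄dX R (f₃ a b)) +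
      ((1/4 : ℚ) • (1 : R⟦X⟧) - (1/2 : ℚ) • C (a + b)) * PowerSeries.X * d⁄dX R (f₃ a b) +
      C (a * b) * f₃ a b = 0 := by
  have hC : ∀ (c : ℚ) (f : R⟦X⟧), c • f = C (algebraMap ℚ R c) * f := fun c f => by
    rw [← smul_eq_C_mul, algebraMap_smul]
  rw [hC, hC, hC]
  set F0 := f₃ a b with hF0
  set F1 := d⁄dX R F0 with hF1
  set F2 := d⁄dX R F1 with hF2
  have hre : (C (algebraMap ℚ R (1/4)) * X ^ 2 - 1) * F2 +
      (C (algebraMap ℚ R (1/4)) * 1 - C (algebraMap ℚ R (1/2)) * C (a + b)) * X * F1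
        + C (a * b) * F0
      = C (algebraMap ℚ R (1/4)) * (X^2 * F2) - F2 + C (algebraMap ℚ R (1/4)) * (X * F1)
        - C (algebraMap ℚ R (1/2) * (a+b)) * (X * F1) + C (a*b) * F0 := by
    simp only [map_add, map_mul]; ring
  rw [hre]
  ext n
  simp only [map_add, map_sub, coeff_C_mul, map_zero]
  have hd : ∀ (f : R⟦X⟧) (j : ℕ), coeff j (d⁄dX R f) = coeff (j+1) f * (j+1) :=
    fun f j => PowerSeries.coeff_derivative f j
  have cf : ∀ j : ℕ, coeff (2*j) (f₃ a b)
      = (((2*j).factorial : ℚ))⁻¹ • ∏ r ∈ Finset.range j, ((a - (r:R)) * (b - (r:R))) := by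
    intro j
    rw [f₃, coeff_mk, if_pos (by omega : (2*j) % 2 = 0), show (2*j)/2 = j by omega]
  match n with
  | 0 =>
    have h2 : (coeff 0) (X^2 * F2) = 0 := by simp [coeff_X_pow_mul']
    have h1 : (coeff 0) (X * F1) = 0 := by simp
    rw [h2, h1, hF2, hd, hd, hF0,
      show (0:ℕ)+1+1 = 2*1 from rfl, show (0:ℕ) = 2*0 from rfl, cf, cf]
    rw [Finset.prod_range_one, Finset.prod_range_zero]
    simp only [Algebra.smul_def]
    have E1 : algebraMap ℚ R (((2*1).factorial:ℚ))⁻¹ * 2 = 1 := by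
      rw [show ((2:R)) = algebraMap ℚ R 2 by simp [map_ofNat], ← map_mul]
      norm_num
    have E0 : algebraMap ℚ R (((2*0).factorial:ℚ))⁻¹ = 1 := by norm_num
    push_cast
    linear_combination (-(a*b)) * E1 + (a*b) * E0
  | 1 =>
    have h2 : (coeff 1) (X^2 * F2) = 0 := by simp [coeff_X_pow_mul']
    have h1 : (coeff 1) (X * F1) = (coeff 0) F1 := by
      simpa using coeff_X_pow_mul F1 1 0
    rw [h2, h1, hF2, hF1, hd, hd, hd, hF0]
    simp [f₃, coeff_mk]
  | (m+2) =>
    have h2 : (coeff (m+1+1)) (X^2 * F2) = coeff m F2 := coeff_X_pow_mul F2 2 m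
    have h1 : (coeff (m+1+1)) (X * F1) = (coeff (m+1)) F1 := by
      simpa using coeff_X_pow_mul F1 1 (m+1)
    rw [h2, h1, hF2, hF1, hd, hd, hd, hd, hF0]
    rcases Nat.even_or_odd m with ⟨k, hk⟩ | ⟨k, hk⟩
    · subst hk
      rw [show k+k+1+1 = 2*(k+1) by ring, show 2*(k+1)+1+1 = 2*(k+2) by ring, cf, cf]
      rw [Finset.prod_range_succ (fun r => ((a - (r:R)) * (b - (r:R)))) (k+1)]
      simp only [Algebra.smul_def]
      push_cast
      set q : ℚ →+* R := (algebraMap ℚ R) with hq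
      set P := ∏ r ∈ Finset.range (k+1), ((a - (r:R)) * (b - (r:R))) with hP
      have A1 : q (1/4) * ((2*(k:R)+2)*(2*(k:R)+1) + (2*(k:R)+2)) = ((k:R)+1)^2 := by
        have h : (2*(k:R)+2)*(2*(k:R)+1) + (2*(k:R)+2) = q ((2*(k:ℚ)+2)*(2*(k:ℚ)+1) + (2*(k:ℚ)+2)) := by
          simp [map_add, map_mul, map_natCast, map_ofNat, map_one]
        rw [h, ← map_mul, show (1/4 : ℚ) * ((2*(k:ℚ)+2)*(2*(k:ℚ)+1) + (2*(k:ℚ)+2)) = ((k:ℚ)+1)^2 by ring]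
        simp [map_pow, map_add, map_natCast, map_one]
      have A3 : q (1/2) * (2*(k:R)+2) = (k:R)+1 := by
        have h : (2*(k:R)+2) = q (2*(k:ℚ)+2) := by
          simp [map_add, map_mul, map_natCast, map_ofNat, map_one]
        rw [h, ← map_mul, show (1/2 : ℚ) * (2*(k:ℚ)+2) = (k:ℚ)+1 by ring]
        simp [map_add, map_natCast, map_one]
      have A2 : q ((Nat.factorial (2*(k+2)) : ℚ))⁻¹ * ((2*(k:R)+4)*(2*(k:R)+3))
          = q ((Nat.factorial (2*(k+1)) : ℚ))⁻¹ := by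
        have h : (2*(k:R)+4)*(2*(k:R)+3) = q ((2*(k:ℚ)+4)*(2*(k:ℚ)+3)) := by
          simp [map_add, map_mul, map_natCast, map_ofNat, map_one]
        rw [h, ← map_mul]
        congr 1
        have hf : (Nat.factorial (2*(k+2)) : ℚ)
            = (2*(k:ℚ)+4)*(2*(k:ℚ)+3)*(Nat.factorial (2*(k+1)) : ℚ) := by
          rw [show 2*(k+2) = (2*(k+1)+1)+1 by ring, Nat.factorial_succ, Nat.factorial_succ]
          push_cast; ring
        rw [hf]
        have hne1 : ((2*(k:ℚ)+4)*(2*(k:ℚ)+3)) ≠ 0 := by positivity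
        have hne2 : (Nat.factorial (2*(k+1)) : ℚ) ≠ 0 := Nat.cast_ne_zero.2 (Nat.factorial_ne_zero _)
        field_simp
      linear_combination (q ((Nat.factorial (2*(k+1)) : ℚ))⁻¹ * P) * A1
        - (P * ((a - ((k:R)+1)) * (b - ((k:R)+1)))) * A2
        - ((a+b) * q ((Nat.factorial (2*(k+1)) : ℚ))⁻¹ * P) * A3
    · subst hk
      have e1 : (2*k+1+2) % 2 = 1 := by omega
      have e2 : (2*k+1+2+1+1) % 2 = 1 := by omega
      simp [f₃, coeff_mk, e1, e2]
end

section
/- Let R be a commutative ring that is a ℚ-algebra and let a, b ∈ R. The power series f₃ is annihilated by the hypergeometric operator: writing θ(f) = x·f′ for the formal Euler operator on R[[x]], one has θ(θ(f₃) − f₃) = x²·( a·g − (x/2)·g′ ), where g = b·f₃ − (x/2)·f₃′; in other words, θ(θ − 1)f₃ = x²·(a − (x/2)·d/dx)(b − (x/2)·d/dx)f₃. -/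
open PowerSeries

lemma coeff_theta {R : Type*} [CommRing R] (f : R⟦X⟧) (n : ℕ) :
    coeff n (PowerSeries.X * d⁄dX R f) = n * coeff n f := by
  cases n with
  | zero => simp
  | succ m =>
    rw [coeff_succ_X_mul, coeff_derivative]
    push_cast
    ring

/-- `f₃` is annihilated by the hypergeometric operator: with `θ(f) = x·f′` and
`g = b·f₃ − (x/2)·f₃′`, one has `θ(θ(f₃) − f₃) = x²·(a·g − (x/2)·g′)`. -/
theorem stmt6 {R : Type*} [CommRing R] [Algebra ℚ R] (a b : R) :
    PowerSeries.X * d⁄dX R (PowerSeries.X * d⁄dX R (f₃ a b) - f₃ a b) =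
      (PowerSeries.X : R⟦X⟧) ^ 2 *
        (C a * (C b * f₃ a b - (1/2 : ℚ) • (PowerSeries.X * d⁄dX R (f₃ a b))) -
          (1/2 : ℚ) • (PowerSeries.X *
            d⁄dX R (C b * f₃ a b - (1/2 : ℚ) • (PowerSeries.X * d⁄dX R (f₃ a b))))) := by
  ext n
  rw [pow_two, mul_assoc]
  match n with
  | 0 => simp [coeff_zero_X_mul]
  | 1 =>
      rw [coeff_theta, coeff_succ_X_mul, coeff_zero_X_mul, map_sub, coeff_theta]
      push_cast
      ring
  | (m + 2) =>
      rw [coeff_theta, coeff_succ_X_mul, coeff_succ_X_mul, map_sub, coeff_theta,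
        map_sub, coeff_C_mul, map_sub, coeff_C_mul, coeff_smul, coeff_theta,
        coeff_smul, coeff_theta, map_sub, coeff_C_mul, coeff_smul, coeff_theta]
      rcases Nat.even_or_odd m with ⟨k, rfl⟩ | ⟨k, rfl⟩
      · -- even case : m = k + k
        have hmod : (k + k) % 2 = 0 := by omega
        have hmod2 : (k + k + 2) % 2 = 0 := by omega
        have hdiv : (k + k) / 2 = k := by omega
        have hdiv2 : (k + k + 2) / 2 = k + 1 := by omega
        simp only [f₃, coeff_mk, hmod, hmod2, hdiv, hdiv2, if_pos rfl, if_true,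
          reduceIte, Finset.prod_range_succ]
        push_cast
        set P : R := ∏ r ∈ Finset.range k, ((a - (r : R)) * (b - (r : R))) with hP
        set K : R := (k : R)
        simp only [Algebra.smul_def]
        set h : R := algebraMap ℚ R (1/2) with hh'
        set u : R := algebraMap ℚ R ((Nat.factorial (k + k) : ℚ))⁻¹ with hu'
        set v : R := algebraMap ℚ R ((Nat.factorial (k + k + 2) : ℚ))⁻¹ with hv'
        have hu : v * ((k : R) + (k : R) + 2) * ((k : R) + (k : R) + 1) = u := by
          rw [hu', hv']
          have : ((k : R) + (k : R) + 2) = algebraMap ℚ R ((k : ℚ) + k + 2) := by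
            simp [map_add, map_natCast, map_ofNat]
          rw [this]
          have : ((k : R) + (k : R) + 1) = algebraMap ℚ R ((k : ℚ) + k + 1) := by
            simp [map_add, map_natCast, map_one]
          rw [this, ← map_mul, ← map_mul]
          congr 1
          have h1 : (Nat.factorial (k + k + 2) : ℚ) ≠ 0 :=
            Nat.cast_ne_zero.mpr (Nat.factorial_ne_zero _)
          have h2 : (Nat.factorial (k + k) : ℚ) ≠ 0 :=
            Nat.cast_ne_zero.mpr (Nat.factorial_ne_zero _)
          have hfac : (Nat.factorial (k + k + 2) : ℚ)
              = ((k:ℚ) + k + 2) * ((k:ℚ) + k + 1) * (Nat.factorial (k + k) : ℚ) := by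
            show ((k + k + 1 + 1).factorial : ℚ) = _
            push_cast [Nat.factorial_succ]
            ring
          field_simp [hfac]
          rw [hfac]
          ring
        have hM : h * ((k : R) + (k : R)) = K := by
          rw [hh']
          have : ((k : R) + (k : R)) = algebraMap ℚ R ((k : ℚ) + k) := by
            simp [map_add, map_natCast]
          rw [this, ← map_mul]
          show algebraMap ℚ R (1/2 * ((k:ℚ) + k)) = (k : R)
          rw [show (1/2 * ((k:ℚ) + k)) = (k:ℚ) by ring, map_natCast]
        linear_combination (P * ((a - K) * (b - K))) * hu
          - ((h * ((k:R) + (k:R)) + K - a - b) * (u * P)) * hM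
      · -- odd case : m = 2k+1
        have hmod : ¬ (2 * k + 1) % 2 = 0 := by omega
        have hmod2 : ¬ (2 * k + 1 + 2) % 2 = 0 := by omega
        simp only [f₃, coeff_mk, hmod, hmod2, if_false, reduceIte]
        simp
end

section
/- Let R be a commutative ring that is a ℚ-algebra and let a, b ∈ R. Then the Wronskian-type identity (x²/4 − 1)·(f₂″·f₁ − f₂·f₁″) = −(1/4 + (a+b)/2)·x·(f₂′·f₁ − f₂·f₁′) holds in R[[x]]. -/
open PowerSeries

section Aux

variable {R : Type*} [CommRing R] [Algebra ℚ R]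

private lemma mul_natCast_eq_smul' (x : R) (m : ℕ) : x * (m : R) = (m : ℚ) • x := by
  rw [← map_natCast (algebraMap ℚ R) m, mul_comm, ← Algebra.smul_def]

private lemma coeff_d' (g : R⟦X⟧) (c : ℕ → R)
    (hg : ∀ n, coeff n g = ((n.factorial : ℚ))⁻¹ • c n) (n : ℕ) :
    coeff n (d⁄dX R g) = ((n.factorial : ℚ))⁻¹ • c (n+1) := by
  rw [coeff_derivative, hg, smul_mul_assoc,
    show ((n : R) + 1) = ((n + 1 : ℕ) : R) by push_cast; ring,
    mul_natCast_eq_smul', smul_smul]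
  congr 1
  have h2 : ((n).factorial : ℚ) ≠ 0 := Nat.cast_ne_zero.2 (Nat.factorial_ne_zero _)
  rw [Nat.factorial_succ]
  push_cast
  field_simp

private lemma ode_gen' (a b : R) (c : ℕ → R)
    (hc : ∀ m : ℕ, c (m+2) = c m *
      ((algebraMap ℚ R ((m : ℚ)/2) + a) * (algebraMap ℚ R ((m : ℚ)/2) + b)))
    (g : R⟦X⟧) (hg : ∀ n, coeff n g = ((n.factorial : ℚ))⁻¹ • c n) :
    ((1/4 : ℚ) • (X : R⟦X⟧) ^ 2 - 1) * (d⁄dX R (d⁄dX R g)) =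
      -(((1/4 : ℚ) • (1 : R⟦X⟧) + (1/2 : ℚ) • C (a + b)) * X * d⁄dX R g + C (a*b) * g) := by
  have hg' : ∀ n, coeff n (d⁄dX R g) = ((n.factorial : ℚ))⁻¹ • c (n+1) := coeff_d' g c hg
  have hg'' : ∀ n, coeff n (d⁄dX R (d⁄dX R g)) = ((n.factorial : ℚ))⁻¹ • c (n+2) :=
    fun n => by rw [coeff_d' _ (fun k => c (k+1)) hg' n]
  have lhs_eq : ((1/4 : ℚ) • (X : R⟦X⟧) ^ 2 - 1) * (d⁄dX R (d⁄dX R g)) =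
      (1/4 : ℚ) • ((d⁄dX R (d⁄dX R g)) * X ^ 2) - d⁄dX R (d⁄dX R g) := by
    rw [sub_mul, one_mul, smul_mul_assoc, mul_comm]
  have rhs_eq : -(((1/4 : ℚ) • (1 : R⟦X⟧) + (1/2 : ℚ) • C (a + b)) * X * d⁄dX R g + C (a*b) * g)
      = -((1/4 : ℚ) • (X * d⁄dX R g) + (1/2 : ℚ) • (C (a+b) * (X * d⁄dX R g)) + C (a*b) * g) := by
    congr 1
    rw [add_mul, add_mul, smul_mul_assoc, smul_mul_assoc, one_mul, smul_mul_assoc,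
      smul_mul_assoc, mul_assoc]
  rw [lhs_eq, rhs_eq]
  ext n
  simp only [map_sub, map_add, map_neg, coeff_smul, coeff_C_mul, hg, hg', hg'',
    coeff_mul_X_pow']
  match n with
  | 0 =>
    rw [add_mul, map_add, coeff_C_mul, coeff_C_mul, if_neg (by omega), coeff_zero_X_mul, hc 0]
    norm_num [Nat.factorial]
    ring
  | 1 =>
    have e1 : coeff 1 (X * d⁄dX R g) = ((Nat.factorial 0 : ℚ))⁻¹ • c 1 := by
      rw [show (1:ℕ) = 0 + 1 from rfl, coeff_succ_X_mul, hg']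
    rw [add_mul, map_add, coeff_C_mul, coeff_C_mul, if_neg (by omega), e1, hc 1]
    simp only [Algebra.smul_def, Nat.factorial]
    have h2 : algebraMap ℚ R ((1:ℚ)/2) * algebraMap ℚ R ((1:ℚ)/2) = algebraMap ℚ R ((1:ℚ)/4) := by
      rw [← map_mul]; norm_num
    push_cast
    norm_num
    linear_combination (-(c 1)) * h2
  | (n+2) =>
    have e2 : coeff (n+2) (X * d⁄dX R g) = (((n+1).factorial : ℚ))⁻¹ • c (n+2) := by
      rw [show n+2 = n+1+1 from rfl, coeff_succ_X_mul, hg']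
    rw [add_mul, map_add, coeff_C_mul, coeff_C_mul, if_pos (by omega),
      show n+2-2 = n from rfl, e2, hc (n+2)]
    have hfn : ((n.factorial : ℚ)) ≠ 0 := Nat.cast_ne_zero.2 (Nat.factorial_ne_zero _)
    have hf2 : (((n+2).factorial : ℚ)) = ((n:ℚ)+2)*((n:ℚ)+1)*(n.factorial : ℚ) := by
      rw [Nat.factorial_succ, Nat.factorial_succ]; push_cast; ring
    have hf1 : (((n+1).factorial : ℚ)) = ((n:ℚ)+1)*(n.factorial : ℚ) := by
      rw [Nat.factorial_succ]; push_cast; ring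
    have hA : algebraMap ℚ R (1/4) * algebraMap ℚ R ((n.factorial : ℚ))⁻¹
        - algebraMap ℚ R (((n+2).factorial : ℚ))⁻¹ *
          (algebraMap ℚ R (((n+2:ℕ) : ℚ)/2) * algebraMap ℚ R (((n+2:ℕ) : ℚ)/2))
        = -(algebraMap ℚ R (1/4) * algebraMap ℚ R (((n+1).factorial : ℚ))⁻¹) := by
      rw [← map_mul, ← map_mul, ← map_mul, ← map_mul, ← map_sub, ← map_neg]
      congr 1
      rw [hf2, hf1]
      push_cast
      field_simp
      ring
    have hB : algebraMap ℚ R (((n+2).factorial : ℚ))⁻¹ * algebraMap ℚ R (((n+2:ℕ) : ℚ)/2)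
        = algebraMap ℚ R ((1:ℚ)/2) * algebraMap ℚ R (((n+1).factorial : ℚ))⁻¹ := by
      rw [← map_mul, ← map_mul]
      congr 1
      rw [hf2, hf1]
      push_cast
      field_simp
    simp only [Algebra.smul_def]
    linear_combination (c (n+2)) * hA - (c (n+2) * (a + b)) * hB

private lemma ode₁' (a b : R) :
    ((1/4 : ℚ) • (X : R⟦X⟧) ^ 2 - 1) * (d⁄dX R (d⁄dX R (f₁ a b))) =
      -(((1/4 : ℚ) • (1 : R⟦X⟧) + (1/2 : ℚ) • C (a + b)) * X * d⁄dX R (f₁ a b)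
        + C (a*b) * f₁ a b) := by
  refine ode_gen' a b
    (fun n => if n % 2 = 0 then ∏ r ∈ Finset.range (n / 2), ((a + (r : R)) * (b + (r : R))) else 0)
    ?_ (f₁ a b) ?_
  · intro m
    rcases Nat.even_or_odd m with ⟨k, hk⟩ | ⟨k, hk⟩
    · subst hk
      rw [if_pos (by omega), if_pos (by omega), show (k + k + 2)/2 = k + 1 by omega,
        show (k + k)/2 = k by omega, Finset.prod_range_succ,
        show algebraMap ℚ R (((k + k : ℕ) : ℚ)/2) = ((k : ℕ) : R) by
          push_cast; rw [show ((k:ℚ) + k)/2 = (k:ℚ) by ring, map_natCast]]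
      ring
    · subst hk
      rw [if_neg (by omega), if_neg (by omega), zero_mul]
  · intro n
    simp only [f₁, coeff_mk]
    split_ifs with h
    · rfl
    · rw [smul_zero]

private lemma ode₂' (a b : R) :
    ((1/4 : ℚ) • (X : R⟦X⟧) ^ 2 - 1) * (d⁄dX R (d⁄dX R (f₂ a b))) =
      -(((1/4 : ℚ) • (1 : R⟦X⟧) + (1/2 : ℚ) • C (a + b)) * X * d⁄dX R (f₂ a b)
        + C (a*b) * f₂ a b) := by
  refine ode_gen' a b
    (fun n => if n % 2 = 1 then ∏ r ∈ Finset.range (n / 2),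
      ((a + (r : R) + algebraMap ℚ R (1/2)) * (b + (r : R) + algebraMap ℚ R (1/2))) else 0)
    ?_ (f₂ a b) ?_
  · intro m
    rcases Nat.even_or_odd m with ⟨k, hk⟩ | ⟨k, hk⟩
    · subst hk
      rw [if_neg (by omega), if_neg (by omega), zero_mul]
    · subst hk
      rw [if_pos (by omega), if_pos (by omega), show (2*k + 1 + 2)/2 = k + 1 by omega,
        show (2*k + 1)/2 = k by omega, Finset.prod_range_succ,
        show algebraMap ℚ R (((2*k + 1 : ℕ) : ℚ)/2) = ((k : ℕ) : R) + algebraMap ℚ R (1/2) by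
          push_cast
          rw [show (2*(k:ℚ) + 1)/2 = (k:ℚ) + 1/2 by ring, map_add, map_natCast]]
      ring
  · intro n
    simp only [f₂, coeff_mk]
    split_ifs with h
    · rfl
    · rw [smul_zero]

end Aux

/-- Wronskian identity:
`(x²/4 − 1)·(f₂″·f₁ − f₂·f₁″) = −(1/4 + (a+b)/2)·x·(f₂′·f₁ − f₂·f₁′)`. -/
theorem stmt8 {R : Type*} [CommRing R] [Algebra ℚ R] (a b : R) :
    ((1/4 : ℚ) • (PowerSeries.X : R⟦X⟧) ^ 2 - 1) *
        (d⁄dX R (d⁄dX R (f₂ a b)) * f₁ a b - f₂ a b * d⁄dX R (d⁄dX R (f₁ a b))) =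
      -(((1/4 : ℚ) • (1 : R⟦X⟧) + (1/2 : ℚ) • C (a + b)) * PowerSeries.X *
          (d⁄dX R (f₂ a b) * f₁ a b - f₂ a b * d⁄dX R (f₁ a b))) := by
  linear_combination (f₁ a b) * ode₂' a b - (f₂ a b) * ode₁' a b
end

section
/- Let G be a finite subgroup of SL(2, ℂ), let ρ₁ denote the two-dimensional complex representation of G given by the inclusion G ⊆ SL(2, ℂ) acting on ℂ², and let V be a finite-dimensional irreducible complex representation of G. If the tensor product representation V ⊗ ρ₁ has a nonzero G-invariant vector (equivalently, contains the trivial representation as a summand), then V is a faithful representation of G. -/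
open Matrix TensorProduct

/-- A finite-order element of `SL(2, ℂ)` fixing a nonzero vector is the identity. -/
lemma sl2_fixed_eq_one (g : SpecialLinearGroup (Fin 2) ℂ) {n : ℕ} (hn : 0 < n)
    (hgn : g ^ n = 1) {x : Fin 2 → ℂ} (hx : x ≠ 0)
    (hgx : (g : Matrix (Fin 2) (Fin 2) ℂ).mulVec x = x) : g = 1 := by
  set M : Matrix (Fin 2) (Fin 2) ℂ := (g : Matrix (Fin 2) (Fin 2) ℂ) with hM
  have hdet : M.det = 1 := g.prop
  set N : Matrix (Fin 2) (Fin 2) ℂ := M - 1 with hNdef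
  have hNx : N.mulVec x = 0 := by
    rw [hNdef, Matrix.sub_mulVec, hgx, Matrix.one_mulVec, sub_self]
  have hdetN : N.det = 0 := Matrix.exists_mulVec_eq_zero_iff.mp ⟨x, hx, hNx⟩
  have e1 : M 0 0 * M 1 1 - M 0 1 * M 1 0 = 1 := by
    rw [← Matrix.det_fin_two]; exact hdet
  have e2 : (M 0 0 - 1) * (M 1 1 - 1) - M 0 1 * M 1 0 = 0 := by
    have h := hdetN
    rw [Matrix.det_fin_two] at h
    simpa [hNdef, Matrix.sub_apply, Matrix.one_apply] using h
  have e3 : M 0 0 + M 1 1 = 2 := by linear_combination e1 - e2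
  have hNN : N * N = 0 := by
    ext i j
    fin_cases i <;> fin_cases j <;>
      simp [hNdef, Matrix.mul_apply, Fin.sum_univ_two, Matrix.sub_apply,
        Matrix.one_apply]
    · linear_combination (M 0 0 - 1) * e3 - e2
    · linear_combination M 0 1 * e3
    · linear_combination M 1 0 * e3
    · linear_combination (M 1 1 - 1) * e3 - e2
  have hpow : ∀ k : ℕ, M ^ k = 1 + (k : ℂ) • N := by
    intro k
    induction k with
    | zero => simp
    | succ k ih =>
      have hM1 : M = 1 + N := by rw [hNdef]; abel
      rw [pow_succ, ih, hM1]
      push_cast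
      rw [add_mul, mul_add, mul_add, one_mul, one_mul, mul_one, smul_mul_assoc, hNN,
        smul_zero, add_zero, add_smul, one_smul]
      abel
  have hMn : M ^ n = 1 := by
    have : ((g ^ n : SpecialLinearGroup (Fin 2) ℂ) : Matrix (Fin 2) (Fin 2) ℂ) = 1 := by
      rw [hgn]; rfl
    simpa using this
  have hN0 : N = 0 := by
    have h1 : (1 : Matrix (Fin 2) (Fin 2) ℂ) + (n : ℂ) • N = 1 := by rw [← hpow n, hMn]
    have h2 : (n : ℂ) • N = 0 := by
      have := h1; rwa [add_eq_left] at this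
    rcases smul_eq_zero.mp h2 with h | h
    · exact absurd h (by exact_mod_cast hn.ne')
    · exact h
  have hM1 : M = 1 := by
    have := hN0; rw [hNdef, sub_eq_zero] at this; exact this
  exact Subtype.ext hM1

/-- The standard 2-dimensional representation `ρ₁` of a subgroup `G` of `SL(2, ℂ)`, given by
the inclusion `G ⊆ SL(2, ℂ)` acting on `ℂ²`. -/
noncomputable def rho₁ (G : Subgroup (SpecialLinearGroup (Fin 2) ℂ)) :
    Representation ℂ G (Fin 2 → ℂ) :=
  (LinearEquiv.automorphismGroup.toLinearMapMonoidHom).comp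
    ((SpecialLinearGroup.toLin' (n := Fin 2) (R := ℂ)).comp G.subtype)

lemma rho₁_apply (G : Subgroup (SpecialLinearGroup (Fin 2) ℂ)) (g : G) (x : Fin 2 → ℂ) :
    rho₁ G g x = ((g : SpecialLinearGroup (Fin 2) ℂ) : Matrix (Fin 2) (Fin 2) ℂ).mulVec x := by
  simp [rho₁, Matrix.SpecialLinearGroup.toLin'_apply, Matrix.toLin'_apply]

/-- Let `G ⊆ SL(2, ℂ)` be a finite subgroup with its standard representation `ρ₁` on `ℂ²`, and
let `ρ` be a finite-dimensional irreducible complex representation of `G` on `W`. If `W ⊗ ℂ²`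
(with the tensor-product representation) has a nonzero `G`-invariant vector, then `ρ` is
faithful. -/
theorem stmt15 (G : Subgroup (SpecialLinearGroup (Fin 2) ℂ)) [Finite G]
    (W : Type*) [AddCommGroup W] [Module ℂ W] [FiniteDimensional ℂ W] [Nontrivial W]
    (ρ : Representation ℂ G W)
    (hirr : ∀ U : Submodule ℂ W, (∀ g : G, ∀ w ∈ U, ρ g w ∈ U) → U = ⊥ ∨ U = ⊤)
    (hinv : ∃ v : W ⊗[ℂ] (Fin 2 → ℂ), v ≠ 0 ∧ ∀ g : G, (ρ.tprod (rho₁ G)) g v = v) :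
    Function.Injective ρ := by
  obtain ⟨v, hv0, hv⟩ := hinv
  rw [injective_iff_map_eq_one]
  intro g hg
  set A : (Fin 2 → ℂ) →ₗ[ℂ] (Fin 2 → ℂ) := rho₁ G g with hA
  have hlt : LinearMap.lTensor W A v = v := by
    have h := hv g
    rw [Representation.tprod_apply, hg] at h
    have h1 : (1 : W →ₗ[ℂ] W) = LinearMap.id := rfl
    rw [LinearMap.lTensor, ← h1]
    exact h
  have hker : LinearMap.lTensor W (A - LinearMap.id) v = 0 := by
    rw [LinearMap.lTensor_sub, LinearMap.lTensor_id, LinearMap.sub_apply,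
      LinearMap.id_apply, hlt, sub_self]
  have hAinj : ¬ Function.Injective (A - LinearMap.id : (Fin 2 → ℂ) →ₗ[ℂ] (Fin 2 → ℂ)) := by
    intro h
    have hinj := Module.Flat.lTensor_preserves_injective_linearMap (M := W)
      (A - LinearMap.id) h
    apply hv0
    apply hinj
    rw [hker, map_zero]
  -- get a nonzero fixed vector
  have : ∃ x : Fin 2 → ℂ, x ≠ 0 ∧ A x = x := by
    rw [← LinearMap.ker_eq_bot] at hAinj
    obtain ⟨x, hxmem, hx0⟩ := Submodule.exists_mem_ne_zero_of_ne_bot hAinj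
    refine ⟨x, hx0, ?_⟩
    have := LinearMap.mem_ker.mp hxmem
    rw [LinearMap.sub_apply, LinearMap.id_apply, sub_eq_zero] at this
    exact this
  obtain ⟨x, hx0, hAx⟩ := this
  have hgx : ((g : SpecialLinearGroup (Fin 2) ℂ) : Matrix (Fin 2) (Fin 2) ℂ).mulVec x = x := by
    rw [← rho₁_apply]; exact hAx
  have hord : (g : SpecialLinearGroup (Fin 2) ℂ) ^ (orderOf g) = 1 := by
    have := pow_orderOf_eq_one g
    exact_mod_cast congrArg (Subtype.val) this
  have hcoe : (g : SpecialLinearGroup (Fin 2) ℂ) = 1 :=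
    sl2_fixed_eq_one _ (orderOf_pos g) hord hx0 hgx
  exact_mod_cast hcoe
end
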